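/- Let R be a positive linear operator on measurable functions on a measure space (X, 𝓑) satisfying R((f∘σ)g) = f·R(g) for all measurable f, g, where σ : X → X is a measurable surjective endomorphism, and R(1) = 1. If λ and μ are probability measures on X with λ ≪ μ, then λR ≪ μR, where λR is defined by ∫ f d(λR) = ∫ R(f) dλ, and the Radon–Nikodym derivative satisfies d(λR)/d(μR) = (dλ/dμ) ∘ σ (μR-a.e.). -/

import Mathlib

open MeasureTheory
open scoped ENNReal NNReal

private lemma iSup_min_natCast' (a : ℝ≥0∞) : ⨆ n : ℕ, min a (n : ℝ≥0∞) = a := by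
  refine le_antisymm (iSup_le fun n => min_le_left _ _) ?_
  rcases eq_or_ne a ⊤ with rfl | h
  · calc (⊤ : ℝ≥0∞) = ⨆ n : ℕ, (n : ℝ≥0∞) := ENNReal.iSup_natCast.symm
      _ ≤ ⨆ n : ℕ, min ⊤ (n : ℝ≥0∞) := by
          exact iSup_mono fun n => le_of_eq (min_eq_right le_top).symm
  · obtain ⟨n, hn⟩ := ENNReal.exists_nat_gt h
    exact le_trans (le_of_eq (min_eq_left hn.le).symm)
      (le_iSup (fun n : ℕ => min a (n : ℝ≥0∞)) n)

/-- If `R` is a positive normalized transfer operator compatible with the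
measurable surjective endomorphism `σ` (pull-out property), and `λ ≪ μ` are probability
measures, then `λR ≪ μR` and `d(λR)/d(μR) = (dλ/dμ) ∘ σ` (`μR`-a.e.). -/
theorem stmt0 {X : Type*} [MeasurableSpace X]
    (σ : X → X) (hσ : Measurable σ) (hσonto : Function.Surjective σ)
    (R : (X → ℝ) → (X → ℝ))
    (hRmeas : ∀ f, Measurable f → Measurable (R f))
    (hRpos : ∀ f, (∀ x, 0 ≤ f x) → ∀ x, 0 ≤ R f x)
    (hRadd : ∀ f g, R (f + g) = R f + R g)
    (hRsmul : ∀ (c : ℝ) (f), R (fun x => c * f x) = fun x => c * R f x)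
    (hRone : R (fun _ => 1) = fun _ => 1)
    (hpull : ∀ f g, Measurable f → Measurable g →
      R (fun x => f (σ x) * g x) = fun x => f x * R g x)
    (lam mu lamR muR : Measure X)
    [IsProbabilityMeasure lam] [IsProbabilityMeasure mu]
    (hlamR : ∀ f : X → ℝ, Measurable f → (∃ C, ∀ x, |f x| ≤ C) →
      ∫ x, f x ∂lamR = ∫ x, R f x ∂lam)
    (hmuR : ∀ f : X → ℝ, Measurable f → (∃ C, ∀ x, |f x| ≤ C) →
      ∫ x, f x ∂muR = ∫ x, R f x ∂mu)
    (hac : lam ≪ mu) :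
    lamR ≪ muR ∧
      lamR.rnDeriv muR =ᵐ[muR] fun x => lam.rnDeriv mu (σ x) := by
  classical
  set h : X → ℝ≥0∞ := lam.rnDeriv mu with hh
  have hmeas_h : Measurable h := Measure.measurable_rnDeriv lam mu
  -- lamR and muR are probability measures
  have hprob : ∀ (ν ν' : Measure X), IsProbabilityMeasure ν →
      (∀ f : X → ℝ, Measurable f → (∃ C, ∀ x, |f x| ≤ C) →
        ∫ x, f x ∂ν' = ∫ x, R f x ∂ν) → IsProbabilityMeasure ν' := by
    intro ν ν' hν hν'
    have h1 : ∫ x, (1 : ℝ) ∂ν' = 1 := by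
      rw [hν' (fun _ => 1) measurable_const ⟨1, by simp⟩, hRone]
      simp
    have h2 : (ν' Set.univ).toReal = 1 := by
      simpa [integral_const, Measure.real] using h1
    exact ⟨(ENNReal.toReal_eq_one_iff _).mp h2⟩
  haveI hPmuR : IsProbabilityMeasure muR := hprob mu muR inferInstance hmuR
  haveI hPlamR : IsProbabilityMeasure lamR := hprob lam lamR inferInstance hlamR
  -- pushforward fact: muR (σ⁻¹ B) = mu B
  have hpush : ∀ B : Set X, MeasurableSet B → muR (σ ⁻¹' B) = mu B := by
    intro B hB
    set iB : X → ℝ := fun x => if x ∈ B then 1 else 0 with hiBdef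
    have hiB : Measurable iB := measurable_const.ite hB measurable_const
    have hRiB : R (fun x => iB (σ x) * (fun _ => (1:ℝ)) x) = fun x => iB x * R (fun _ => 1) x :=
      hpull iB (fun _ => 1) hiB measurable_const
    have h1 : ∫ x, iB (σ x) * 1 ∂muR = ∫ x, iB x * 1 ∂mu := by
      rw [hmuR (fun x => iB (σ x) * 1) (by exact ((hiB.comp hσ).mul measurable_const))
        ⟨1, fun x => by by_cases hx : σ x ∈ B <;> simp [iB, hx]⟩]
      rw [hRiB, hRone]
    have h2 : ∫ x, iB (σ x) * 1 ∂muR = (muR (σ ⁻¹' B)).toReal := by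
      have : (fun x => iB (σ x) * 1) = (σ ⁻¹' B).indicator (fun _ => (1:ℝ)) := by
        funext x; by_cases hx : σ x ∈ B <;> simp [iB, hx, Set.indicator_apply, Set.mem_preimage]
      rw [this, integral_indicator_const (1:ℝ) (hσ hB)]
      simp
      rfl
    have h3 : ∫ x, iB x * 1 ∂mu = (mu B).toReal := by
      have : (fun x => iB x * 1) = B.indicator (fun _ => (1:ℝ)) := by
        funext x; by_cases hx : x ∈ B <;> simp [iB, hx, Set.indicator_apply]
      rw [this, integral_indicator_const (1:ℝ) hB]
      simp
      rfl
    rw [h2, h3] at h1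
    exact (ENNReal.toReal_eq_toReal_iff' (measure_ne_top _ _) (measure_ne_top _ _)).mp h1
  -- a.e. finiteness of h and h ∘ σ
  have hfin_mu : ∀ᵐ x ∂mu, h x ≠ ⊤ := by
    filter_upwards [Measure.rnDeriv_lt_top lam mu] with x hx using hx.ne
  have hfin_muR : ∀ᵐ x ∂muR, h (σ x) ≠ ⊤ := by
    have hBmeas : MeasurableSet {y | h y = ⊤} := hmeas_h (measurableSet_singleton ⊤)
    have hmuB : mu {y | h y = ⊤} = 0 := by
      have h2 := hfin_mu
      rw [ae_iff] at h2
      simpa using h2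
    rw [ae_iff]
    have : {x | ¬ h (σ x) ≠ ⊤} = σ ⁻¹' {y | h y = ⊤} := by
      ext x; simp [Set.mem_preimage]
    rw [this, hpush _ hBmeas, hmuB]
  have hmono_ofReal : Monotone ENNReal.ofReal := fun _ _ hab => ENNReal.ofReal_le_ofReal hab
  -- main claim: lamR = muR.withDensity (h ∘ σ)
  have hkey : lamR = muR.withDensity (fun x => h (σ x)) := by
    refine Measure.ext fun A hA => ?_
    set f : X → ℝ := A.indicator (fun _ => (1:ℝ)) with hfdef
    have hf_meas : Measurable f := measurable_const.indicator hA
    have hf_nonneg : ∀ x, 0 ≤ f x := fun x => Set.indicator_nonneg (fun _ _ => zero_le_one) x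
    have hf_le_one : ∀ x, f x ≤ 1 := fun x => Set.indicator_le_self' (fun _ _ => by norm_num) x
    have hf_le_one : ∀ x, f x ≤ 1 := by
      intro x; by_cases hx : x ∈ A <;> simp [f, Set.indicator_apply, hx]
    have hf_bound : ∀ x, |f x| ≤ 1 := by
      intro x; rw [abs_of_nonneg (hf_nonneg x)]; exact hf_le_one x
    have hRf_meas : Measurable (R f) := hRmeas f hf_meas
    have hRf_nonneg : ∀ x, 0 ≤ R f x := hRpos f hf_nonneg
    have hRf_le_one : ∀ x, R f x ≤ 1 := by
      intro x
      have hsum : R (f + fun y => 1 - f y) = R f + R (fun y => 1 - f y) :=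
        hRadd f (fun y => 1 - f y)
      have hone : (f + fun y => 1 - f y) = fun _ => (1:ℝ) := by
        funext y; simp [Pi.add_apply]
      rw [hone, hRone] at hsum
      have h0 : 0 ≤ R (fun y => 1 - f y) x :=
        hRpos _ (fun y => by linarith [hf_le_one y]) x
      have := congrFun hsum x
      simp only [Pi.add_apply] at this
      linarith
    -- truncations
    set hn : ℕ → X → ℝ := fun n x => min ((h x).toReal) n with hndef
    have hn_meas : ∀ n, Measurable (hn n) :=
      fun n => hmeas_h.ennreal_toReal.min measurable_const
    have hn_nonneg : ∀ n x, 0 ≤ hn n x := fun n x => le_min ENNReal.toReal_nonneg (by positivity)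
    have hn_le : ∀ n x, hn n x ≤ n := fun n x => min_le_right _ _
    have hofReal_hn : ∀ n x, h x ≠ ⊤ → ENNReal.ofReal (hn n x) = min (h x) n := by
      intro n x hx
      rw [hndef]
      simp only
      rw [hmono_ofReal.map_min, ENNReal.ofReal_toReal hx, ENNReal.ofReal_natCast]
    -- the real-integral identity for truncations
    have key : ∀ n : ℕ, ∫ x, hn n (σ x) * f x ∂muR = ∫ x, hn n x * R f x ∂mu := by
      intro n
      have hb : ∃ C, ∀ x, |hn n (σ x) * f x| ≤ C := by
        refine ⟨n, fun x => ?_⟩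
        rw [abs_mul, abs_of_nonneg (hn_nonneg n _), abs_of_nonneg (hf_nonneg x)]
        calc hn n (σ x) * f x ≤ (n : ℝ) * 1 :=
              mul_le_mul (hn_le n _) (hf_le_one x) (hf_nonneg x) (by positivity)
          _ = n := mul_one _
      rw [hmuR (fun x => hn n (σ x) * f x) (((hn_meas n).comp hσ).mul hf_meas) hb,
        hpull (hn n) f (hn_meas n) hf_meas]
    -- lintegral versions
    set An : ℕ → ℝ≥0∞ := fun n => ∫⁻ x, min (h x) n * ENNReal.ofReal (R f x) ∂mu with hAndef
    set Bn : ℕ → ℝ≥0∞ := fun n => ∫⁻ x, min (h (σ x)) n * ENNReal.ofReal (f x) ∂muR with hBndef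
    have hAn_meas : ∀ n : ℕ, Measurable fun x => min (h x) (n : ℝ≥0∞) * ENNReal.ofReal (R f x) :=
      fun n => (hmeas_h.min measurable_const).mul hRf_meas.ennreal_ofReal
    have hBn_meas : ∀ n : ℕ, Measurable fun x => min (h (σ x)) (n : ℝ≥0∞) * ENNReal.ofReal (f x) :=
      fun n => ((hmeas_h.comp hσ).min measurable_const).mul hf_meas.ennreal_ofReal
    have hAn_le : ∀ n : ℕ, An n ≤ n := by
      intro n
      calc An n ≤ ∫⁻ _, (n : ℝ≥0∞) ∂mu := by
            refine lintegral_mono fun x => ?_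
            calc min (h x) n * ENNReal.ofReal (R f x) ≤ (n : ℝ≥0∞) * 1 := by
                  gcongr
                  · exact min_le_right _ _
                  · exact ENNReal.ofReal_le_one.mpr (hRf_le_one x)
              _ = n := mul_one _
        _ = n := by simp
    have hBn_le : ∀ n : ℕ, Bn n ≤ n := by
      intro n
      calc Bn n ≤ ∫⁻ _, (n : ℝ≥0∞) ∂muR := by
            refine lintegral_mono fun x => ?_
            calc min (h (σ x)) n * ENNReal.ofReal (f x) ≤ (n : ℝ≥0∞) * 1 := by
                  gcongr
                  · exact min_le_right _ _
                  · exact ENNReal.ofReal_le_one.mpr (hf_le_one x)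
              _ = n := mul_one _
        _ = n := by simp
    have keyE : ∀ n : ℕ, An n = Bn n := by
      intro n
      have ha : ∫ x, hn n x * R f x ∂mu = (An n).toReal := by
        rw [integral_eq_lintegral_of_nonneg_ae
          (Filter.Eventually.of_forall fun x => mul_nonneg (hn_nonneg n x) (hRf_nonneg x))
          ((hn_meas n).mul hRf_meas).aestronglyMeasurable]
        congr 1
        refine lintegral_congr_ae ?_
        filter_upwards [hfin_mu] with x hx
        rw [ENNReal.ofReal_mul (hn_nonneg n x), hofReal_hn n x hx]
      have hb : ∫ x, hn n (σ x) * f x ∂muR = (Bn n).toReal := by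
        rw [integral_eq_lintegral_of_nonneg_ae
          (Filter.Eventually.of_forall fun x => mul_nonneg (hn_nonneg n _) (hf_nonneg x))
          (((hn_meas n).comp hσ).mul hf_meas).aestronglyMeasurable]
        congr 1
        refine lintegral_congr_ae ?_
        filter_upwards [hfin_muR] with x hx
        rw [ENNReal.ofReal_mul (hn_nonneg n _), hofReal_hn n (σ x) hx]
      have htr : (An n).toReal = (Bn n).toReal := by rw [← ha, ← hb, key n]
      exact (ENNReal.toReal_eq_toReal_iff'
        (lt_of_le_of_lt (hAn_le n) (ENNReal.natCast_lt_top n)).ne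
        (lt_of_le_of_lt (hBn_le n) (ENNReal.natCast_lt_top n)).ne).mp htr
    -- MCT on both sides
    have hsupA : (⨆ n : ℕ, An n) = ∫⁻ x, h x * ENNReal.ofReal (R f x) ∂mu := by
      rw [hAndef, ← lintegral_iSup hAn_meas]
      · refine lintegral_congr fun x => ?_
        rw [← ENNReal.iSup_mul, iSup_min_natCast' (h x)]
      · intro i j hij x
        exact mul_le_mul_left (min_le_min le_rfl (by exact_mod_cast Nat.cast_le.mpr hij)) _
    have hsupB : (⨆ n : ℕ, Bn n) = ∫⁻ x, h (σ x) * ENNReal.ofReal (f x) ∂muR := by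
      rw [hBndef, ← lintegral_iSup hBn_meas]
      · refine lintegral_congr fun x => ?_
        rw [← ENNReal.iSup_mul, iSup_min_natCast' (h (σ x))]
      · intro i j hij x
        exact mul_le_mul_left (min_le_min le_rfl (by exact_mod_cast Nat.cast_le.mpr hij)) _
    -- left chain
    have hRf_int : Integrable (R f) lam := by
      refine Integrable.mono' (integrable_const (1:ℝ)) hRf_meas.aestronglyMeasurable ?_
      exact Filter.Eventually.of_forall fun x => by
        rw [Real.norm_eq_abs, abs_of_nonneg (hRf_nonneg x)]; exact hRf_le_one x
    have hL : ∫⁻ x, h x * ENNReal.ofReal (R f x) ∂mu = ENNReal.ofReal (∫ x, R f x ∂lam) := by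
      have hlam_eq : mu.withDensity h = lam := Measure.withDensity_rnDeriv_eq lam mu hac
      have hwd := lintegral_withDensity_eq_lintegral_mul mu hmeas_h hRf_meas.ennreal_ofReal
      rw [hlam_eq] at hwd
      rw [ofReal_integral_eq_lintegral_ofReal hRf_int
          (Filter.Eventually.of_forall hRf_nonneg), hwd]
      exact lintegral_congr fun x => rfl
    -- lamR A via f
    have hlamRA : lamR A = ENNReal.ofReal (∫ x, R f x ∂lam) := by
      rw [← hlamR f hf_meas ⟨1, hf_bound⟩]
      rw [hfdef, integral_indicator_const (1:ℝ) hA]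
      simp [ENNReal.ofReal_toReal (measure_ne_top lamR A)]
    -- right chain
    have hRight : ∫⁻ x, h (σ x) * ENNReal.ofReal (f x) ∂muR = ∫⁻ x in A, h (σ x) ∂muR := by
      rw [← lintegral_indicator hA (fun x => h (σ x))]
      refine lintegral_congr fun x => ?_
      by_cases hx : x ∈ A <;> simp [f, Set.indicator_apply, hx]
    rw [withDensity_apply _ hA, ← hRight, ← hsupB]
    calc lamR A = ENNReal.ofReal (∫ x, R f x ∂lam) := hlamRA
      _ = ∫⁻ x, h x * ENNReal.ofReal (R f x) ∂mu := hL.symm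
      _ = ⨆ n : ℕ, An n := hsupA.symm
      _ = ⨆ n : ℕ, Bn n := by simp only [keyE]
  -- conclude
  constructor
  · rw [hkey]
    exact withDensity_absolutelyContinuous muR _
  · rw [hkey]
    exact Measure.rnDeriv_withDensity muR (hmeas_h.comp hσ)
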